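/- arXiv:math/0702577 — 2 statements merged into one kernel-verified Lean document; each statement's English description precedes it below -/
import Mathlib

section
/- Fix n ≥ 1. The map R(β1,β2) : (X,Y) ↦ (P,Q) on (ℂⁿ×ℂⁿ)², where X=(X¹,X²), Y=(Y¹,Y²) with X¹,X²,Y¹,Y² ∈ ℂⁿ, defined componentwise by P¹ᵢ = Y¹ᵢ/Sᵢ, P²ᵢ = Y²ᵢ·Sᵢ, Q¹ᵢ = X¹ᵢ·Sᵢ, Q²ᵢ = X²ᵢ + Y²ᵢ·(1−Sᵢ), with Sᵢ = 1 + (β1−β2)/(X¹ᵢ·(1 − Σⱼ Y²ⱼ/X¹ⱼ)), satisfies the parameter-dependent Yang–Baxter relation R^{(2,3)}(β2,β3) ∘ R^{(1,3)}(β1,β3) ∘ R^{(1,2)}(β1,β2) = R^{(1,2)}(β1,β2) ∘ R^{(1,3)}(β1,β3) ∘ R^{(2,3)}(β2,β3), as maps on ((ℂⁿ×ℂⁿ))³, at every point where all denominators occurring in both composite maps are nonzero. -/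
noncomputable section

open scoped BigOperators

/-- The phase space `𝕏 = ℂⁿ × ℂⁿ`. -/
abbrev V (n : ℕ) : Type := (Fin n → ℂ) × (Fin n → ℂ)

/-- `Sᵢ = 1 + (β1−β2)/(X¹ᵢ·(1 − Σⱼ Y²ⱼ/X¹ⱼ))` for `z = ((X¹,X²),(Y¹,Y²))`. -/
def Sval {n : ℕ} (β1 β2 : ℂ) (z : V n × V n) (i : Fin n) : ℂ :=
  1 + (β1 - β2) / (z.1.1 i * (1 - ∑ j, z.2.2 j / z.1.1 j))

/-- The n-vector Yang–Baxter map from the lattice n-vector nonlinear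
Schrödinger system: `P¹ᵢ = Y¹ᵢ/Sᵢ`, `P²ᵢ = Y²ᵢ·Sᵢ`, `Q¹ᵢ = X¹ᵢ·Sᵢ`,
`Q²ᵢ = X²ᵢ + Y²ᵢ·(1−Sᵢ)`. -/
def R {n : ℕ} (β1 β2 : ℂ) (z : V n × V n) : V n × V n :=
  ((fun i => z.2.1 i / Sval β1 β2 z i, fun i => z.2.2 i * Sval β1 β2 z i),
   (fun i => z.1.1 i * Sval β1 β2 z i,
    fun i => z.1.2 i + z.2.2 i * (1 - Sval β1 β2 z i)))

/-- All denominators occurring in `R(β1,β2)` are nonzero at `z`. -/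
def D {n : ℕ} (β1 β2 : ℂ) (z : V n × V n) : Prop :=
  (∀ j, z.1.1 j ≠ 0) ∧
    (∀ i, z.1.1 i * (1 - ∑ j, z.2.2 j / z.1.1 j) ≠ 0) ∧
    (∀ i, Sval β1 β2 z i ≠ 0)

/-- `R` acting on factors 1,2 of a triple. -/
def R12 {n : ℕ} (β1 β2 : ℂ) (w : V n × V n × V n) : V n × V n × V n :=
  ((R β1 β2 (w.1, w.2.1)).1, (R β1 β2 (w.1, w.2.1)).2, w.2.2)

/-- `R` acting on factors 1,3 of a triple. -/
def R13 {n : ℕ} (β1 β2 : ℂ) (w : V n × V n × V n) : V n × V n × V n :=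
  ((R β1 β2 (w.1, w.2.2)).1, w.2.1, (R β1 β2 (w.1, w.2.2)).2)

/-- `R` acting on factors 2,3 of a triple. -/
def R23 {n : ℕ} (β1 β2 : ℂ) (w : V n × V n × V n) : V n × V n × V n :=
  (w.1, (R β1 β2 (w.2.1, w.2.2)).1, (R β1 β2 (w.2.1, w.2.2)).2)

lemma rel (k1 k2 k3 p q E t1 t2 t3 s1 s2 s3 : ℂ) (hk : k3 = k1 + k2)
    (hp : p ≠ 0) (hq : q ≠ 0)
    (h1 : q - t1 * E ≠ 0) (h2 : p + t2 * E ≠ 0)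
    (h3 : p + s1 * E ≠ 0) (h4 : q - s2 * E ≠ 0)
    (e1 : t1 = k1 / p) (e2 : t2 = k3 / (q - t1 * E)) (e3 : t3 = k2 / (p + t2 * E))
    (f1 : s1 = k2 / q) (f2 : s2 = k3 / (p + s1 * E)) (f3 : s3 = k1 / (q - s2 * E)) :
    s2 = t1 + t3 ∧ t2 = s1 + s3 ∧ t1 * s1 = t3 * s3 := by
  have hA : q - t1 * E = (p * q - k1 * E) / p := by rw [e1]; field_simp; try ring
  have hB : p * q - k1 * E ≠ 0 := by
    intro h; apply h1; rw [hA, h, zero_div]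
  have ht2 : t2 = k3 * p / (p * q - k1 * E) := by rw [e2, hA, div_div_eq_mul_div]
  have hC : p + t2 * E = p * (p * q + k2 * E) / (p * q - k1 * E) := by
    rw [ht2, hk]; field_simp; try ring
  have hD : p * q + k2 * E ≠ 0 := by
    intro h; apply h2; rw [hC, h, mul_zero, zero_div]
  have ht3 : t3 = k2 * (p * q - k1 * E) / (p * (p * q + k2 * E)) := by
    rw [e3, hC, div_div_eq_mul_div]
  have hA' : p + s1 * E = (p * q + k2 * E) / q := by rw [f1]; field_simp; try ring
  have hs2 : s2 = k3 * q / (p * q + k2 * E) := by rw [f2, hA', div_div_eq_mul_div]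
  have hC' : q - s2 * E = q * (p * q - k1 * E) / (p * q + k2 * E) := by
    rw [hs2, hk]; field_simp [show q * p + k2 * E ≠ 0 by rwa [mul_comm q]]; try ring
  have hs3 : s3 = k1 * (p * q + k2 * E) / (q * (p * q - k1 * E)) := by
    rw [f3, hC', div_div_eq_mul_div]
  refine ⟨?_, ?_, ?_⟩
  · rw [hs2, e1, ht3, hk]; field_simp [show q * p + k2 * E ≠ 0 by rwa [mul_comm q]]; ring
  · rw [ht2, f1, hs3, hk]; field_simp; ring
  · rw [e1, f1, ht3, hs3]; field_simp

lemma Sval_eq {n : ℕ} (β1 β2 : ℂ) (x a y b : Fin n → ℂ) (i : Fin n) (hx : x i ≠ 0) :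
    Sval β1 β2 ((x, a), (y, b)) i
      = (x i + (β1 - β2) / (1 - ∑ j, b j / x j)) / x i := by
  unfold Sval
  rw [add_div, div_self hx, div_div, mul_comm]

lemma R_eq {n : ℕ} (β1 β2 : ℂ) (x a y b : Fin n → ℂ) (hx : ∀ j, x j ≠ 0) :
    R β1 β2 ((x, a), (y, b)) =
      ((fun i => y i * x i / (x i + (β1 - β2) / (1 - ∑ j, b j / x j)),
        fun i => b i * (x i + (β1 - β2) / (1 - ∑ j, b j / x j)) / x i),
       (fun i => x i + (β1 - β2) / (1 - ∑ j, b j / x j),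
        fun i => a i - (β1 - β2) / (1 - ∑ j, b j / x j) * b i / x i)) := by
  unfold R
  refine Prod.ext (Prod.ext ?_ ?_) (Prod.ext ?_ ?_) <;>
    · funext i
      dsimp only
      rw [Sval_eq β1 β2 x a y b i (hx i)]
      generalize (β1 - β2) / (1 - ∑ j, b j / x j) = t
      field_simp [hx i]
      try ring

set_option maxHeartbeats 2000000 in
/-- The parameter-dependent Yang–Baxter relation for the n-vector Yang–Baxter
map obtained from the lattice n-vector nonlinear Schrödinger system, at every
point where all denominators occurring in both composite maps are nonzero. -/
theorem yang_baxter_vector_NLS (n : ℕ) (hn : 1 ≤ n) (β1 β2 β3 : ℂ)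
    (w : V n × V n × V n)
    (hL1 : D β1 β2 (w.1, w.2.1))
    (hL2 : D β1 β3 ((R12 β1 β2 w).1, (R12 β1 β2 w).2.2))
    (hL3 : D β2 β3 ((R13 β1 β3 (R12 β1 β2 w)).2.1, (R13 β1 β3 (R12 β1 β2 w)).2.2))
    (hR1 : D β2 β3 (w.2.1, w.2.2))
    (hR2 : D β1 β3 ((R23 β2 β3 w).1, (R23 β2 β3 w).2.2))
    (hR3 : D β1 β2 ((R13 β1 β3 (R23 β2 β3 w)).1, (R13 β1 β3 (R23 β2 β3 w)).2.1)) :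
    R23 β2 β3 (R13 β1 β3 (R12 β1 β2 w)) = R12 β1 β2 (R13 β1 β3 (R23 β2 β3 w)) := by
  obtain ⟨⟨x, a⟩, ⟨y, b⟩, ⟨z, c⟩⟩ := w
  obtain ⟨hx, hL1b, hL1c⟩ := hL1
  obtain ⟨hy, hR1b, hR1c⟩ := hR1
  dsimp only at hx hL1b hL1c hy hR1b hR1c
  set p := 1 - ∑ j, b j / x j with hpdef
  set q := 1 - ∑ j, c j / y j with hqdef
  set E := ∑ j, c j / (x j * y j) with hEdef
  set t1 := (β1 - β2) / p with ht1def
  set s1 := (β2 - β3) / q with hs1def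
  have i0 : Fin n := ⟨0, hn⟩
  have hp : p ≠ 0 := (mul_ne_zero_iff.mp (hL1b i0)).2
  have hq : q ≠ 0 := (mul_ne_zero_iff.mp (hR1b i0)).2
  have hxt1 : ∀ i, x i + t1 ≠ 0 := by
    intro i h
    have hS := hL1c i
    rw [Sval_eq β1 β2 x a y b i (hx i), ← hpdef, ← ht1def, h, zero_div] at hS
    exact hS rfl
  have hys1 : ∀ i, y i + s1 ≠ 0 := by
    intro i h
    have hS := hR1c i
    rw [Sval_eq β2 β3 y b z c i (hy i), ← hqdef, ← hs1def, h, zero_div] at hS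
    exact hS rfl
  -- left chain, step 1
  have h1 : R12 β1 β2 ((x, a), (y, b), (z, c)) =
      ((fun i => y i * x i / (x i + t1), fun i => b i * (x i + t1) / x i),
       (fun i => x i + t1, fun i => a i - t1 * b i / x i), (z, c)) := by
    simp only [R12]
    rw [R_eq β1 β2 x a y b hx]
    try simp only [← hpdef, ← ht1def]
  have hX'1 : ∀ j, y j * x j / (x j + t1) ≠ 0 := fun j =>
    div_ne_zero (mul_ne_zero (hy j) (hx j)) (hxt1 j)
  have hsig2 : (1 - ∑ j, c j / (y j * x j / (x j + t1))) = q - t1 * E := by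
    have hterm : ∀ j, c j / (y j * x j / (x j + t1))
        = c j / y j + t1 * (c j / (x j * y j)) := by
      intro j
      rw [div_div_eq_mul_div]
      field_simp [hx j, hy j]
    rw [Finset.sum_congr rfl (fun j _ => hterm j), Finset.sum_add_distrib,
      ← Finset.mul_sum, hqdef, hEdef]
    ring
  rw [h1] at hL2
  obtain ⟨hL2a, hL2b, hL2c⟩ := hL2
  dsimp only at hL2a hL2b hL2c
  have hq2 : q - t1 * E ≠ 0 := by
    have := (mul_ne_zero_iff.mp (hL2b i0)).2
    rwa [hsig2] at this
  set t2 := (β1 - β3) / (q - t1 * E) with ht2def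
  have h2 : R13 β1 β3
      ((fun i => y i * x i / (x i + t1), fun i => b i * (x i + t1) / x i),
       (fun i => x i + t1, fun i => a i - t1 * b i / x i), (z, c)) =
      ((fun i => z i * (y i * x i / (x i + t1)) / (y i * x i / (x i + t1) + t2),
        fun i => c i * (y i * x i / (x i + t1) + t2) / (y i * x i / (x i + t1))),
       (fun i => x i + t1, fun i => a i - t1 * b i / x i),
       (fun i => y i * x i / (x i + t1) + t2,
        fun i => b i * (x i + t1) / x i - t2 * c i / (y i * x i / (x i + t1)))) := by
    simp only [R13]
    rw [R_eq β1 β3 (fun i => y i * x i / (x i + t1))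
      (fun i => b i * (x i + t1) / x i) z c hX'1]
    try dsimp only
    rw [hsig2]
    try simp only [← ht2def]
  have hX't2 : ∀ i, y i * x i / (x i + t1) + t2 ≠ 0 := by
    intro i h
    have hS := hL2c i
    rw [Sval_eq β1 β3 (fun i => y i * x i / (x i + t1))
      (fun i => b i * (x i + t1) / x i) z c i (hX'1 i)] at hS
    try dsimp only at hS
    rw [hsig2, ← ht2def, h, zero_div] at hS
    exact hS rfl
  have hsig3 : (1 - ∑ j, (b j * (x j + t1) / x j - t2 * c j / (y j * x j / (x j + t1)))
      / (x j + t1)) = p + t2 * E := by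
    have hterm : ∀ j, (b j * (x j + t1) / x j - t2 * c j / (y j * x j / (x j + t1)))
        / (x j + t1) = b j / x j - t2 * (c j / (x j * y j)) := by
      intro j
      rw [div_div_eq_mul_div]
      field_simp [hx j, hy j, hxt1 j]
    rw [Finset.sum_congr rfl (fun j _ => hterm j), Finset.sum_sub_distrib,
      ← Finset.mul_sum, hpdef, hEdef]
    ring
  rw [h1, h2] at hL3
  obtain ⟨hL3a, hL3b, hL3c⟩ := hL3
  dsimp only at hL3a hL3b hL3c
  have hq3 : p + t2 * E ≠ 0 := by
    have := (mul_ne_zero_iff.mp (hL3b i0)).2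
    rwa [hsig3] at this
  set t3 := (β2 - β3) / (p + t2 * E) with ht3def
  have h3 : R23 β2 β3
      ((fun i => z i * (y i * x i / (x i + t1)) / (y i * x i / (x i + t1) + t2),
        fun i => c i * (y i * x i / (x i + t1) + t2) / (y i * x i / (x i + t1))),
       (fun i => x i + t1, fun i => a i - t1 * b i / x i),
       (fun i => y i * x i / (x i + t1) + t2,
        fun i => b i * (x i + t1) / x i - t2 * c i / (y i * x i / (x i + t1)))) =
      ((fun i => z i * (y i * x i / (x i + t1)) / (y i * x i / (x i + t1) + t2),
        fun i => c i * (y i * x i / (x i + t1) + t2) / (y i * x i / (x i + t1))),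
       (fun i => (y i * x i / (x i + t1) + t2) * (x i + t1) / (x i + t1 + t3),
        fun i => (b i * (x i + t1) / x i - t2 * c i / (y i * x i / (x i + t1)))
          * (x i + t1 + t3) / (x i + t1)),
       (fun i => x i + t1 + t3,
        fun i => (a i - t1 * b i / x i)
          - t3 * (b i * (x i + t1) / x i - t2 * c i / (y i * x i / (x i + t1)))
            / (x i + t1))) := by
    simp only [R23]
    rw [R_eq β2 β3 (fun i => x i + t1) (fun i => a i - t1 * b i / x i)
      (fun i => y i * x i / (x i + t1) + t2)
      (fun i => b i * (x i + t1) / x i - t2 * c i / (y i * x i / (x i + t1))) hxt1]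
    try dsimp only
    rw [hsig3]
    try simp only [← ht3def]
  have hxt13 : ∀ i, x i + t1 + t3 ≠ 0 := by
    intro i h
    have hS := hL3c i
    rw [Sval_eq β2 β3 (fun i => x i + t1) (fun i => a i - t1 * b i / x i)
      (fun i => y i * x i / (x i + t1) + t2)
      (fun i => b i * (x i + t1) / x i - t2 * c i / (y i * x i / (x i + t1)))
      i (hxt1 i)] at hS
    try dsimp only at hS
    rw [hsig3, ← ht3def, h, zero_div] at hS
    exact hS rfl
  -- right chain, step 1
  have k1 : R23 β2 β3 ((x, a), (y, b), (z, c)) =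
      ((x, a), (fun i => z i * y i / (y i + s1), fun i => c i * (y i + s1) / y i),
       (fun i => y i + s1, fun i => b i - s1 * c i / y i)) := by
    simp only [R23]
    rw [R_eq β2 β3 y b z c hy]
    try simp only [← hqdef, ← hs1def]
  have hsig2' : (1 - ∑ j, (b j - s1 * c j / y j) / x j) = p + s1 * E := by
    have hterm : ∀ j, (b j - s1 * c j / y j) / x j
        = b j / x j - s1 * (c j / (x j * y j)) := by
      intro j
      field_simp [hx j, hy j]
    rw [Finset.sum_congr rfl (fun j _ => hterm j), Finset.sum_sub_distrib,
      ← Finset.mul_sum, hpdef, hEdef]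
    ring
  rw [k1] at hR2
  obtain ⟨hR2a, hR2b, hR2c⟩ := hR2
  try dsimp only at hR2a hR2b hR2c
  have hq2' : p + s1 * E ≠ 0 := by
    have := (mul_ne_zero_iff.mp (hR2b i0)).2
    rwa [hsig2'] at this
  set s2 := (β1 - β3) / (p + s1 * E) with hs2def
  have k2 : R13 β1 β3
      ((x, a), (fun i => z i * y i / (y i + s1), fun i => c i * (y i + s1) / y i),
       (fun i => y i + s1, fun i => b i - s1 * c i / y i)) =
      ((fun i => (y i + s1) * x i / (x i + s2),
        fun i => (b i - s1 * c i / y i) * (x i + s2) / x i),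
       (fun i => z i * y i / (y i + s1), fun i => c i * (y i + s1) / y i),
       (fun i => x i + s2, fun i => a i - s2 * (b i - s1 * c i / y i) / x i)) := by
    simp only [R13]
    rw [R_eq β1 β3 x a (fun i => y i + s1) (fun i => b i - s1 * c i / y i) hx]
    try dsimp only
    rw [hsig2']
    try simp only [← hs2def]
  have hxs2 : ∀ i, x i + s2 ≠ 0 := by
    intro i h
    have hS := hR2c i
    rw [Sval_eq β1 β3 x a (fun i => y i + s1) (fun i => b i - s1 * c i / y i)
      i (hx i)] at hS
    try dsimp only at hS
    rw [hsig2', ← hs2def, h, zero_div] at hS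
    exact hS rfl
  have hXs1 : ∀ j, (y j + s1) * x j / (x j + s2) ≠ 0 := fun j =>
    div_ne_zero (mul_ne_zero (hys1 j) (hx j)) (hxs2 j)
  have hsig3' : (1 - ∑ j, (c j * (y j + s1) / y j) / ((y j + s1) * x j / (x j + s2)))
      = q - s2 * E := by
    have hterm : ∀ j, (c j * (y j + s1) / y j) / ((y j + s1) * x j / (x j + s2))
        = c j / y j + s2 * (c j / (x j * y j)) := by
      intro j
      rw [div_div_eq_mul_div]
      field_simp [hx j, hy j, hys1 j]
    rw [Finset.sum_congr rfl (fun j _ => hterm j), Finset.sum_add_distrib,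
      ← Finset.mul_sum, hqdef, hEdef]
    ring
  rw [k1, k2] at hR3
  obtain ⟨hR3a, hR3b, hR3c⟩ := hR3
  try dsimp only at hR3a hR3b hR3c
  have hq3' : q - s2 * E ≠ 0 := by
    have := (mul_ne_zero_iff.mp (hR3b i0)).2
    rwa [hsig3'] at this
  set s3 := (β1 - β2) / (q - s2 * E) with hs3def
  have k3 : R12 β1 β2
      ((fun i => (y i + s1) * x i / (x i + s2),
        fun i => (b i - s1 * c i / y i) * (x i + s2) / x i),
       (fun i => z i * y i / (y i + s1), fun i => c i * (y i + s1) / y i),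
       (fun i => x i + s2, fun i => a i - s2 * (b i - s1 * c i / y i) / x i)) =
      ((fun i => (z i * y i / (y i + s1)) * ((y i + s1) * x i / (x i + s2))
          / ((y i + s1) * x i / (x i + s2) + s3),
        fun i => (c i * (y i + s1) / y i) * ((y i + s1) * x i / (x i + s2) + s3)
          / ((y i + s1) * x i / (x i + s2))),
       (fun i => (y i + s1) * x i / (x i + s2) + s3,
        fun i => (b i - s1 * c i / y i) * (x i + s2) / x i
          - s3 * (c i * (y i + s1) / y i) / ((y i + s1) * x i / (x i + s2))),
       (fun i => x i + s2, fun i => a i - s2 * (b i - s1 * c i / y i) / x i)) := by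
    simp only [R12]
    rw [R_eq β1 β2 (fun i => (y i + s1) * x i / (x i + s2))
      (fun i => (b i - s1 * c i / y i) * (x i + s2) / x i)
      (fun i => z i * y i / (y i + s1)) (fun i => c i * (y i + s1) / y i) hXs1]
    try dsimp only
    rw [hsig3']
    try simp only [← hs3def]
  have hXs3 : ∀ i, (y i + s1) * x i / (x i + s2) + s3 ≠ 0 := by
    intro i h
    have hS := hR3c i
    rw [Sval_eq β1 β2 (fun i => (y i + s1) * x i / (x i + s2))
      (fun i => (b i - s1 * c i / y i) * (x i + s2) / x i)
      (fun i => z i * y i / (y i + s1)) (fun i => c i * (y i + s1) / y i)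
      i (hXs1 i)] at hS
    try dsimp only at hS
    rw [hsig3', ← hs3def, h, zero_div] at hS
    exact hS rfl
  obtain ⟨hA, hB, hC⟩ := rel (β1 - β2) (β2 - β3) (β1 - β3) p q E t1 t2 t3 s1 s2 s3
    (by ring) hp hq hq2 hq3 hq2' hq3' ht1def ht2def ht3def hs1def hs2def hs3def
  clear_value p q E t1 s1 t2 s2 t3 s3
  rw [h1, h2, h3, k1, k2, k3]
  simp only [hA, hB] at hXs3 hX't2 hxs2 ⊢
  simp only [← add_assoc] at hXs3 hX't2 hxs2 ⊢
  have e1 : ∀ i, y i * x i / (x i + t1) + s1 + s3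
      = (y i * x i + (s1 + s3) * (x i + t1)) / (x i + t1) := by
    intro i; field_simp [hxt1 i]; ring
  have e2 : ∀ i, (y i + s1) * x i / (x i + t1 + t3) + s3
      = ((y i + s1) * x i + s3 * (x i + t1 + t3)) / (x i + t1 + t3) := by
    intro i; field_simp [hxt13 i]; try ring
  have hD1 : ∀ i, y i * x i + (s1 + s3) * (x i + t1) ≠ 0 := by
    intro i h
    exact hX't2 i (by rw [e1 i, h, zero_div])
  have hD2 : ∀ i, (y i + s1) * x i + s3 * (x i + t1 + t3) ≠ 0 := by
    intro i h
    exact hXs3 i (by rw [e2 i, h, zero_div])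
  have hkey : ∀ i, y i * x i + (s1 + s3) * (x i + t1)
      = (y i + s1) * x i + s3 * (x i + t1 + t3) := by
    intro i; linear_combination hC
  refine Prod.ext (Prod.ext ?_ ?_) (Prod.ext (Prod.ext ?_ ?_) (Prod.ext ?_ ?_)) <;>
    (funext i; dsimp only)
  · -- G1
    rw [e1 i, hkey i]
    simp only [div_div_eq_mul_div]
    field_simp [hx i, hy i, hxt1 i, hys1 i, hxt13 i, hD2 i]
    try ring
  · -- G2
    rw [e1 i, e2 i, hkey i]
    simp only [div_div_eq_mul_div]
    field_simp [hx i, hy i, hxt1 i, hys1 i, hxt13 i, hD2 i]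
    try ring
  · -- G3
    rw [e1 i, e2 i, hkey i]
    field_simp [hxt1 i, hxt13 i]
    try ring
  · -- G4
    simp only [div_div_eq_mul_div]
    field_simp [hx i, hy i, hxt1 i, hys1 i, hxt13 i]
    try ring
  · -- G6 (appears as 5th goal)
    have L6 : a i - t1 * b i / x i
        - t3 * (b i * (x i + t1) / x i - (s1 + s3) * c i / (y i * x i / (x i + t1)))
          / (x i + t1)
        = a i - (t1 + t3) * b i / x i + t3 * (s1 + s3) * (c i / (x i * y i)) := by
      have h1 : b i * (x i + t1) / x i - (s1 + s3) * c i / (y i * x i / (x i + t1))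
          = (b i * y i - (s1 + s3) * c i) * (x i + t1) / (x i * y i) := by
        rw [div_div_eq_mul_div,
          div_sub_div _ _ (hx i) (mul_ne_zero (hy i) (hx i)),
          div_eq_div_iff (mul_ne_zero (hx i) (mul_ne_zero (hy i) (hx i)))
            (mul_ne_zero (hx i) (hy i))]
        ring
      rw [h1]
      field_simp [hx i, hy i, hxt1 i]
      ring
    have R6 : a i - (t1 + t3) * (b i - s1 * c i / y i) / x i
        = a i - (t1 + t3) * b i / x i + (t1 + t3) * s1 * (c i / (x i * y i)) := by
      field_simp [hx i, hy i]
      ring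
    rw [L6, R6, show t3 * (s1 + s3) = (t1 + t3) * s1 from by linear_combination -hC]
end
end

section
/- Fix n ≥ 1. The map R(β1,β2) : (X,Y) ↦ (P,Q) on (ℂⁿ×ℂⁿ)² defined componentwise by P¹ᵢ = Y¹ᵢ/Sᵢ, P²ᵢ = Y²ᵢ·Sᵢ, Q¹ᵢ = X¹ᵢ·Sᵢ, Q²ᵢ = X²ᵢ + Y²ᵢ·(1−Sᵢ), with Sᵢ = 1 + (β1−β2)/(X¹ᵢ·(1 − Σⱼ Y²ⱼ/X¹ⱼ)), is unitary: for all X,Y ∈ ℂⁿ×ℂⁿ with all occurring denominators nonzero, if R(β1,β2)(X,Y) = (P,Q) then R(β2,β1)(Q,P) = (Y,X). -/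
noncomputable section

open scoped BigOperators

/-- Unitarity of the n-vector Yang–Baxter map obtained from the lattice
n-vector nonlinear Schrödinger system: if `R(β1,β2)(X,Y) = (P,Q)`, then
`R(β2,β1)(Q,P) = (Y,X)`, wherever all occurring denominators are nonzero. -/
theorem unitarity_vector_NLS (n : ℕ) (hn : 1 ≤ n) (β1 β2 : ℂ) (X Y : V n)
    (h1 : D β1 β2 (X, Y))
    (h2 : D β2 β1 ((R β1 β2 (X, Y)).2, (R β1 β2 (X, Y)).1)) :
    R β2 β1 ((R β1 β2 (X, Y)).2, (R β1 β2 (X, Y)).1) = (Y, X) := by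
  obtain ⟨hX1, hden, hS⟩ := h1
  have hSne : ∀ i, Sval β1 β2 (X, Y) i ≠ 0 := hS
  have hdne : ∀ i, X.1 i * (1 - ∑ j, Y.2 j / X.1 j) ≠ 0 := hden
  have hs : ∀ i, Sval β1 β2 (X, Y) i * (X.1 i * (1 - ∑ j, Y.2 j / X.1 j))
      = X.1 i * (1 - ∑ j, Y.2 j / X.1 j) + (β1 - β2) := by
    intro i
    have h := hdne i
    simp only [Sval]
    field_simp
    rw [mul_add, mul_one, mul_div_assoc', mul_div_cancel_left₀ _ h]
  have key : ∀ i, Sval β2 β1 ((R β1 β2 (X, Y)).2, (R β1 β2 (X, Y)).1) i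
      = (Sval β1 β2 (X, Y) i)⁻¹ := by
    intro i
    have hsum : ∑ j, (Y.2 j * Sval β1 β2 (X, Y) j) / (X.1 j * Sval β1 β2 (X, Y) j)
        = ∑ j, Y.2 j / X.1 j := by
      apply Finset.sum_congr rfl
      intro j _
      rw [mul_div_mul_right _ _ (hSne j)]
    have lhs_eq : Sval β2 β1 ((R β1 β2 (X, Y)).2, (R β1 β2 (X, Y)).1) i
        = 1 + (β2 - β1) / ((X.1 i * Sval β1 β2 (X, Y) i) *
            (1 - ∑ j, (Y.2 j * Sval β1 β2 (X, Y) j) / (X.1 j * Sval β1 β2 (X, Y) j))) := rfl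
    rw [lhs_eq, hsum]
    have h := hdne i
    have h2 := hSne i
    have h3 := hs i
    rw [show X.1 i * Sval β1 β2 (X, Y) i * (1 - ∑ j, Y.2 j / X.1 j)
        = Sval β1 β2 (X, Y) i * (X.1 i * (1 - ∑ j, Y.2 j / X.1 j)) from by ring, h3]
    have hdc : X.1 i * (1 - ∑ j, Y.2 j / X.1 j) + (β1 - β2) ≠ 0 := by
      rw [← h3]; exact mul_ne_zero h2 h
    refine eq_inv_of_mul_eq_one_left ?_
    field_simp
    linear_combination h3
  refine Prod.ext (Prod.ext ?_ ?_) (Prod.ext ?_ ?_) <;> funext i <;>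
    simp only [R] <;> simp only [R] at key <;> rw [key i]
  · rw [div_div, mul_inv_cancel₀ (hSne i), div_one]
  · rw [mul_inv_cancel_right₀ (hSne i)]
  · rw [mul_inv_cancel_right₀ (hSne i)]
  · have h2 := hSne i
    field_simp
    ring
end
end
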